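/- Let $n = 7k + 2^k$ and suppose $A_1, \ldots, A_{2^k} \subseteq \mathbb{F}_2^{7k}$ are pairwise disjoint affine subspaces, $A_i = V_i + a_i$ with $\dim V_i = 2k$. Define $f : \mathbb{F}_2^{7k} \times \mathbb{F}_2^{2^k} \to \{-1,1\}$ by $f(x,y) = (-1)^{y_i}$ if $x \in A_i$ and $f(x,y) = 1$ otherwise. Then for each $i$, every $\gamma \in (V_i^\perp \times \{0\}) + (0, e_i)$ satisfies $\hat{f}(\gamma) \neq 0$; consequently $|\mathrm{supp}(\hat f)| \geq 2^{6k}$. -/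

import Mathlib

/-- The standard bilinear form on `𝔽₂ⁿ`. -/
def ip {n : ℕ} (x y : Fin n → ZMod 2) : ZMod 2 := ∑ i, x i * y i

/-- Orthogonal complement of a subspace w.r.t. the standard bilinear form. -/
def perp {n : ℕ} (W : Submodule (ZMod 2) (Fin n → ZMod 2)) : Set (Fin n → ZMod 2) :=
  {v | ∀ w ∈ W, ip v w = 0}

/-- Fourier coefficient of a function on `𝔽₂^{7k} × 𝔽₂^{2^k}`. -/
noncomputable def fhatP (k : ℕ)
    (f : (Fin (7 * k) → ZMod 2) × (Fin (2 ^ k) → ZMod 2) → ℝ)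
    (γ : (Fin (7 * k) → ZMod 2) × (Fin (2 ^ k) → ZMod 2)) : ℝ :=
  (∑ z : (Fin (7 * k) → ZMod 2) × (Fin (2 ^ k) → ZMod 2),
      f z * (-1 : ℝ) ^ (ip z.1 γ.1 + ip z.2 γ.2).val) / 2 ^ (7 * k + 2 ^ k)

section Aux

lemma zmod2_val0 : (ZMod.val (0:ZMod 2)) = 0 := rfl
lemma zmod2_val1 : (ZMod.val (1:ZMod 2)) = 1 := rfl
lemma zmod2_val2 : (ZMod.val (2:ZMod 2)) = 0 := rfl

lemma chi_add (a b : ZMod 2) :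
    ((-1 : ℝ)) ^ ((a + b).val) = (-1 : ℝ) ^ a.val * (-1 : ℝ) ^ b.val := by
  rw [← pow_add, ZMod.val_add, ← neg_one_pow_eq_pow_mod_two]

lemma chi_sq (a : ZMod 2) : ((-1 : ℝ)) ^ a.val * (-1 : ℝ) ^ a.val = 1 := by
  fin_cases a <;> norm_num [zmod2_val0, zmod2_val1, ZMod.val]

lemma chi_ne (a : ZMod 2) : ((-1 : ℝ)) ^ a.val ≠ 0 := by positivity

lemma ip_comm {n} (x y : Fin n → ZMod 2) : ip x y = ip y x := by
  simp [ip, mul_comm]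

lemma ip_add_left {n} (x y c : Fin n → ZMod 2) : ip (x + y) c = ip x c + ip y c := by
  simp [ip, add_mul, Finset.sum_add_distrib]

lemma ip_add_right {n} (c x y : Fin n → ZMod 2) : ip c (x + y) = ip c x + ip c y := by
  simp [ip, mul_add, Finset.sum_add_distrib]

lemma ip_smul_left {n} (r : ZMod 2) (x c : Fin n → ZMod 2) : ip (r • x) c = r • ip x c := by
  simp [ip, Finset.mul_sum, mul_assoc]

lemma ip_smul_right {n} (r : ZMod 2) (c x : Fin n → ZMod 2) : ip c (r • x) = r • ip c x := by
  simp [ip, Finset.mul_sum]; ring_nf; simp [mul_comm, mul_assoc, mul_left_comm]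

lemma ip_single {n} (y : Fin n → ZMod 2) (i : Fin n) : ip y (Pi.single i 1) = y i := by
  unfold ip
  rw [Finset.sum_eq_single i]
  · simp
  · intro b _ hb; simp [Pi.single_eq_of_ne hb]
  · simp

lemma chi_sum_zero {m : ℕ} (c : Fin m → ZMod 2) (hc : c ≠ 0) :
    ∑ y : Fin m → ZMod 2, ((-1 : ℝ)) ^ ((ip y c).val) = 0 := by
  obtain ⟨j, hj⟩ : ∃ j, c j ≠ 0 := by
    by_contra h; push_neg at h; exact hc (funext h)
  have hj1 : c j = 1 := by
    revert hj; generalize c j = z; revert z; decide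
  set d : Fin m → ZMod 2 := Pi.single j 1 with hd
  have key : ∀ y : Fin m → ZMod 2,
      ((-1 : ℝ)) ^ ((ip (y + d) c).val) = -((-1 : ℝ)) ^ ((ip y c).val) := by
    intro y
    have h1 : ip (y + d) c = ip y c + 1 := by
      rw [ip_add_left]
      congr 1
      rw [hd, ip_comm, ip_single, hj1]
    rw [h1, chi_add]
    simp [zmod2_val1]
  have heq : ∑ y : Fin m → ZMod 2, ((-1 : ℝ)) ^ ((ip (y + d) c).val)
      = ∑ y : Fin m → ZMod 2, ((-1 : ℝ)) ^ ((ip y c).val) :=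
    Fintype.sum_equiv (Equiv.addRight d) _ _ (fun y => rfl)
  have heq2 : ∑ y : Fin m → ZMod 2, ((-1 : ℝ)) ^ ((ip (y + d) c).val)
      = -∑ y : Fin m → ZMod 2, ((-1 : ℝ)) ^ ((ip y c).val) := by
    simp_rw [key]
    simp
  linarith [heq.symm.trans heq2]

lemma single_ne_zero' {m : ℕ} (i : Fin m) :
    (Pi.single i (1:ZMod 2)) ≠ (0 : Fin m → ZMod 2) := by
  intro h
  have := congrFun h i
  simp at this

def Bf {n : ℕ} : (Fin n → ZMod 2) →ₗ[ZMod 2] (Fin n → ZMod 2) →ₗ[ZMod 2] ZMod 2 :=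
  LinearMap.mk₂ (ZMod 2) ip ip_add_left ip_smul_left ip_add_right ip_smul_right

lemma perp_card_ge {n r : ℕ} (W : Submodule (ZMod 2) (Fin n → ZMod 2))
    (h : Module.finrank (ZMod 2) W ≤ r) :
    2 ^ (n - r) ≤ Nat.card (perp W) := by
  classical
  set ψ : (Fin n → ZMod 2) →ₗ[ZMod 2] (W →ₗ[ZMod 2] ZMod 2) := Bf.compl₂ W.subtype with hψ
  have hset : perp W = ↑(LinearMap.ker ψ) := by
    ext v
    simp only [perp, Set.mem_setOf_eq, SetLike.mem_coe, LinearMap.mem_ker]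
    constructor
    · intro hv
      ext w
      simpa [hψ, Bf] using hv w w.2
    · intro hv w hw
      simpa [hψ, Bf] using LinearMap.congr_fun hv ⟨w, hw⟩
  rw [hset, SetLike.coe_sort_coe]
  haveI := Fintype.ofFinite ↥(LinearMap.ker ψ)
  rw [Nat.card_eq_fintype_card, Module.card_eq_pow_finrank (K := ZMod 2), ZMod.card]
  apply Nat.pow_le_pow_right (by norm_num)
  have h1 := LinearMap.finrank_range_add_finrank_ker ψ
  have h2 : Module.finrank (ZMod 2) (LinearMap.range ψ) ≤ r := by
    refine le_trans (Submodule.finrank_le _) ?_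
    rw [show Module.finrank (ZMod 2) (W →ₗ[ZMod 2] ZMod 2) = Module.finrank (ZMod 2) W from
      Subspace.dual_finrank_eq]
    exact h
  rw [Module.finrank_pi] at h1
  simp only [Fintype.card_fin] at h1
  omega

end Aux

theorem stmt7 (k : ℕ)
    (V : Fin (2 ^ k) → Submodule (ZMod 2) (Fin (7 * k) → ZMod 2))
    (a : Fin (2 ^ k) → Fin (7 * k) → ZMod 2)
    (A : Fin (2 ^ k) → Set (Fin (7 * k) → ZMod 2))
    (hA : ∀ i, A i = (· + a i) '' (V i : Set (Fin (7 * k) → ZMod 2)))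
    (hdim : ∀ i, Module.finrank (ZMod 2) (V i) = 2 * k)
    (hdisj : ∀ i j, i ≠ j → A i ∩ A j = ∅)
    (f : (Fin (7 * k) → ZMod 2) × (Fin (2 ^ k) → ZMod 2) → ℝ)
    (hf₁ : ∀ x y i, x ∈ A i → f (x, y) = (-1 : ℝ) ^ (y i).val)
    (hf₂ : ∀ x y, (∀ i, x ∉ A i) → f (x, y) = 1) :
    (∀ i : Fin (2 ^ k), ∀ γ ∈ perp (V i),
        fhatP k f (γ, Pi.single i 1) ≠ 0) ∧
      2 ^ (6 * k) ≤
        Nat.card {γ : (Fin (7 * k) → ZMod 2) × (Fin (2 ^ k) → ZMod 2) //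
          fhatP k f γ ≠ 0} := by
  classical
  have key : ∀ i : Fin (2 ^ k), ∀ γ ∈ perp (V i),
      fhatP k f (γ, Pi.single i 1) ≠ 0 := by
    intro i γ hγ
    unfold fhatP
    rw [div_ne_zero_iff]
    refine ⟨?_, by positivity⟩
    rw [Fintype.sum_prod_type]
    have hcard : Fintype.card (Fin (2 ^ k) → ZMod 2) = 2 ^ (2 ^ k) := by
      simp [ZMod.card]
    have hx_eval : ∀ x : Fin (7 * k) → ZMod 2,
        (∑ y : Fin (2 ^ k) → ZMod 2,
            f (x, y) * (-1 : ℝ) ^ ((ip x γ + ip y (Pi.single i 1)).val))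
        = if x ∈ A i then (2 : ℝ) ^ (2 ^ k) * (-1 : ℝ) ^ ((ip x γ).val) else 0 := by
      intro x
      by_cases hxi : x ∈ A i
      · rw [if_pos hxi]
        have hterm : ∀ y : Fin (2 ^ k) → ZMod 2,
            f (x, y) * (-1 : ℝ) ^ ((ip x γ + ip y (Pi.single i 1)).val)
            = (-1 : ℝ) ^ ((ip x γ).val) := by
          intro y
          rw [hf₁ x y i hxi, chi_add, ip_single]
          calc (-1 : ℝ) ^ (y i).val * ((-1:ℝ) ^ (ip x γ).val * (-1:ℝ) ^ (y i).val)
              = ((-1 : ℝ) ^ (y i).val * (-1:ℝ) ^ (y i).val) * (-1:ℝ) ^ (ip x γ).val := by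
                ring
            _ = (-1:ℝ) ^ (ip x γ).val := by rw [chi_sq, one_mul]
        rw [Finset.sum_congr rfl (fun y _ => hterm y), Finset.sum_const,
          Finset.card_univ, hcard, nsmul_eq_mul]
        push_cast
        ring
      · rw [if_neg hxi]
        by_cases hex : ∃ j, x ∈ A j
        · obtain ⟨j, hxj⟩ := hex
          have hij : j ≠ i := fun h => hxi (h ▸ hxj)
          set c : Fin (2 ^ k) → ZMod 2 := Pi.single j 1 + Pi.single i 1 with hc
          have hcne : c ≠ 0 := by
            intro h
            have := congrFun h j
            simp [hc, Pi.single_eq_same, Pi.single_eq_of_ne hij] at this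
          have hterm : ∀ y : Fin (2 ^ k) → ZMod 2,
              f (x, y) * (-1 : ℝ) ^ ((ip x γ + ip y (Pi.single i 1)).val)
              = (-1 : ℝ) ^ ((ip x γ).val) * (-1 : ℝ) ^ ((ip y c).val) := by
            intro y
            rw [hf₁ x y j hxj, chi_add, ip_single]
            have h2 : ip y c = y j + y i := by
              rw [hc, ip_add_right, ip_single, ip_single]
            rw [h2, chi_add]
            ring
          rw [Finset.sum_congr rfl (fun y _ => hterm y), ← Finset.mul_sum,
            chi_sum_zero c hcne, mul_zero]
        · push_neg at hex
          have hterm : ∀ y : Fin (2 ^ k) → ZMod 2,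
              f (x, y) * (-1 : ℝ) ^ ((ip x γ + ip y (Pi.single i 1)).val)
              = (-1 : ℝ) ^ ((ip x γ).val)
                * (-1 : ℝ) ^ ((ip y (Pi.single i 1)).val) := by
            intro y
            rw [hf₂ x y hex, chi_add, one_mul]
          rw [Finset.sum_congr rfl (fun y _ => hterm y), ← Finset.mul_sum,
            chi_sum_zero _ (single_ne_zero' i), mul_zero]
    rw [Finset.sum_congr rfl (fun x _ => hx_eval x), ← Finset.sum_filter]
    have hconst : ∀ x ∈ Finset.univ.filter (· ∈ A i),
        (2 : ℝ) ^ (2 ^ k) * (-1 : ℝ) ^ ((ip x γ).val)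
        = (2 : ℝ) ^ (2 ^ k) * (-1 : ℝ) ^ ((ip (a i) γ).val) := by
      intro x hx
      rw [Finset.mem_filter] at hx
      have hx' := hx.2
      rw [hA i] at hx'
      obtain ⟨v, hv, rfl⟩ := hx'
      have h0 : ip v γ = 0 := by rw [ip_comm]; exact hγ v hv
      rw [show ip (v + a i) γ = ip (a i) γ by rw [ip_add_left, h0, zero_add]]
    rw [Finset.sum_congr rfl hconst, Finset.sum_const, nsmul_eq_mul]
    have hmem : a i ∈ Finset.univ.filter (· ∈ A i) := by
      rw [Finset.mem_filter]
      refine ⟨Finset.mem_univ _, ?_⟩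
      rw [hA i]
      exact ⟨0, (V i).zero_mem, by simp⟩
    have hcne : ((Finset.univ.filter (· ∈ A i)).card : ℝ) ≠ 0 := by
      exact_mod_cast Finset.card_ne_zero_of_mem hmem
    exact mul_ne_zero hcne (mul_ne_zero (by positivity) (chi_ne _))
  refine ⟨key, ?_⟩
  haveI : ∀ i : Fin (2 ^ k), Fintype ↥(perp (V i)) := fun i => Fintype.ofFinite _
  set g : (Σ i : Fin (2 ^ k), ↥(perp (V i))) →
      {γ : (Fin (7 * k) → ZMod 2) × (Fin (2 ^ k) → ZMod 2) // fhatP k f γ ≠ 0} :=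
    fun p => ⟨(p.2.1, Pi.single p.1 1), key p.1 p.2.1 p.2.2⟩ with hg
  have hginj : Function.Injective g := by
    rintro ⟨i, γ, hγ⟩ ⟨j, δ, hδ⟩ h
    simp only [hg, Subtype.mk.injEq, Prod.mk.injEq] at h
    obtain ⟨h1, h2⟩ := h
    have hij : i = j := by
      by_contra hij
      have := congrFun h2 i
      simp [Pi.single_eq_same, Pi.single_eq_of_ne hij] at this
    subst hij
    subst h1
    rfl
  have hcard_i : ∀ i : Fin (2 ^ k), 2 ^ (5 * k) ≤ Nat.card ↥(perp (V i)) := by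
    intro i
    have := perp_card_ge (V i) (le_of_eq (hdim i))
    have h75 : 7 * k - 2 * k = 5 * k := by omega
    rwa [h75] at this
  calc 2 ^ (6 * k) = 2 ^ k * 2 ^ (5 * k) := by
        rw [← pow_add]; congr 1; ring
    _ ≤ Nat.card (Σ i : Fin (2 ^ k), ↥(perp (V i))) := by
        rw [Nat.card_eq_fintype_card, Fintype.card_sigma]
        calc 2 ^ k * 2 ^ (5 * k)
            = ∑ _i : Fin (2 ^ k), 2 ^ (5 * k) := by
              simp [Finset.sum_const, Finset.card_univ]
          _ ≤ ∑ i : Fin (2 ^ k), Fintype.card ↥(perp (V i)) :=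
              Finset.sum_le_sum fun i _ => by
                rw [← Nat.card_eq_fintype_card]; exact hcard_i i
    _ ≤ _ := Nat.card_le_card_of_injective g hginj
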